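/- Let λ₁, λ₂ ∈ (0,1) and 0 ≤ k < 1. Then the real quadratic polynomial χ(x) = x² - ((1+λ₁)(1+λ₂)k - (λ₁+λ₂))x + λ₁λ₂ is strictly positive on [1, ∞). Consequently, every complex root of χ has modulus strictly less than 1. -/

import Mathlib

/-- for λ₁, λ₂ ∈ (0,1) and 0 ≤ k < 1, the quadratic
χ(x) = x² - ((1+λ₁)(1+λ₂)k - (λ₁+λ₂))x + λ₁λ₂ is positive on [1, ∞),
and every complex root of χ has modulus < 1. -/
theorem stmt_9 (l₁ l₂ k : ℝ) (hl₁ : l₁ ∈ Set.Ioo (0:ℝ) 1)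
    (hl₂ : l₂ ∈ Set.Ioo (0:ℝ) 1) (hk : 0 ≤ k) (hk1 : k < 1) :
    (∀ x : ℝ, 1 ≤ x →
      0 < x^2 - ((1 + l₁) * (1 + l₂) * k - (l₁ + l₂)) * x + l₁ * l₂) ∧
    (∀ z : ℂ,
      z^2 - (((1 + l₁) * (1 + l₂) * k - (l₁ + l₂) : ℝ) : ℂ) * z
        + ((l₁ * l₂ : ℝ) : ℂ) = 0 → ‖z‖ < 1) := by
  obtain ⟨h1, h2⟩ := hl₁
  obtain ⟨h3, h4⟩ := hl₂
  have key : ∀ x : ℝ, 1 ≤ x →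
      0 < x^2 - ((1 + l₁) * (1 + l₂) * k - (l₁ + l₂)) * x + l₁ * l₂ := by
    intro x hx
    nlinarith [mul_pos (sub_pos.2 h2) (sub_pos.2 h4),
      mul_nonneg (sub_nonneg.2 hx) (by nlinarith : (0:ℝ) ≤ x - l₁ * l₂),
      mul_pos (mul_pos (by linarith : (0:ℝ) < 1 + l₁) (by linarith : (0:ℝ) < 1 + l₂))
        (sub_pos.2 hk1), mul_pos h1 h3, hx]
  refine ⟨key, ?_⟩
  intro z hz
  set b := (1 + l₁) * (1 + l₂) * k - (l₁ + l₂) with hb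
  set c := l₁ * l₂ with hc
  have hre : z.re ^ 2 - z.im ^ 2 - b * z.re + c = 0 := by
    have := congrArg Complex.re hz
    simpa [Complex.ext_iff, pow_two, Complex.mul_re, Complex.mul_im] using this
  have him : 2 * z.re * z.im - b * z.im = 0 := by
    have := congrArg Complex.im hz
    simp [Complex.ext_iff, pow_two, Complex.mul_re, Complex.mul_im] at this
    linarith
  have hsq : ‖z‖ ^ 2 = z.re ^ 2 + z.im ^ 2 := by
    rw [Complex.sq_norm, Complex.normSq_apply]; ring
  have hlt : z.re ^ 2 + z.im ^ 2 < 1 := by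
    by_cases hy : z.im = 0
    · -- real root
      rw [hy]
      have hroot : z.re ^ 2 - b * z.re + c = 0 := by
        rw [hy] at hre; linarith [hre]
      by_contra h
      push_neg at h
      have hx1 : 1 ≤ |z.re| := by
        nlinarith [sq_abs z.re, abs_nonneg z.re]
      rcases abs_le'.mp (le_refl |z.re|) with _
      rcases le_or_gt 1 z.re with hxp | hxn
      · have := key z.re hxp; nlinarith
      · have hxneg : z.re ≤ -1 := by
          rcases abs_cases z.re with ⟨he, _⟩ | ⟨he, _⟩
          · linarith [hx1, he.symm ▸ hx1]
          · linarith [he ▸ hx1]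
        -- show χ(z.re) > 0 for z.re ≤ -1, contradiction
        have hbge : -(l₁ + l₂) ≤ b := by
          have : 0 ≤ (1 + l₁) * (1 + l₂) * k := by positivity
          simp [hb]; linarith
        nlinarith [mul_pos (sub_pos.2 h2) (sub_pos.2 h4), mul_pos h1 h3,
          mul_nonneg (by linarith : (0:ℝ) ≤ -1 - z.re) (by nlinarith : (0:ℝ) ≤ -z.re - c)]
    · -- complex root: b = 2 re, re²+im² = c < 1
      have hb2 : b = 2 * z.re := by
        have : z.im * (2 * z.re - b) = 0 := by linarith [him]
        rcases mul_eq_zero.mp this with h | h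
        · exact absurd h hy
        · linarith
      have : z.re ^ 2 + z.im ^ 2 = c := by rw [hb2] at hre; nlinarith [hre]
      rw [this]; nlinarith [mul_pos h1 h3]
  nlinarith [hsq, norm_nonneg z, hlt]
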